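/- The Fermat equation z0^p + z1^p + z2^p = 0 with p ≥ 3 has no solution in coprime, not all constant polynomials z0, z1, z2 ∈ ℂ[x]. -/

import Mathlib

open Polynomial UniqueFactorizationMonoid

private lemma fermat_coprime_aux (p : ℕ) (hp : 1 ≤ p) (a b c : ℂ[X])
    (hsum : a ^ p + b ^ p + c ^ p = 0)
    (hcop : ∀ d : ℂ[X], d ∣ a → d ∣ b → d ∣ c → IsUnit d) : IsCoprime a b := by
  rw [← EuclideanDomain.gcd_isUnit_iff]
  by_contra hgu
  have hpne : p ≠ 0 := by omega
  have hgne : EuclideanDomain.gcd a b ≠ 0 := by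
    intro h
    obtain ⟨ha, hb⟩ := EuclideanDomain.gcd_eq_zero_iff.mp h
    have hc : c = 0 := by
      have : c ^ p = 0 := by
        rw [ha, hb, zero_pow hpne] at hsum; linear_combination hsum
      exact pow_eq_zero_iff hpne |>.mp this
    have hXu := hcop X (ha ▸ dvd_zero X) (hb ▸ dvd_zero X) (hc ▸ dvd_zero X)
    exact Polynomial.not_isUnit_X hXu
  obtain ⟨q, hqirr, hqdvd⟩ := WfDvdMonoid.exists_irreducible_factor hgu hgne
  have hqa : q ∣ a := hqdvd.trans (EuclideanDomain.gcd_dvd_left a b)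
  have hqb : q ∣ b := hqdvd.trans (EuclideanDomain.gcd_dvd_right a b)
  have hqc : q ∣ c := by
    have : q ∣ c ^ p := by
      have : c ^ p = -(a ^ p + b ^ p) := by linear_combination hsum
      rw [this]
      exact dvd_neg.mpr (dvd_add (hqa.trans (dvd_pow_self a hpne)) (hqb.trans (dvd_pow_self b hpne)))
    exact hqirr.prime.dvd_of_dvd_pow this
  exact hqirr.not_isUnit (hcop q hqa hqb hqc)

private lemma fermat_unit_aux (p : ℕ) (hpne : p ≠ 0) (a b : ℂ[X])
    (hco : IsCoprime a b) (h : a ^ p + b ^ p = 0) : IsUnit a ∧ IsUnit b := by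
  have ha : a ∣ b ^ p := by
    have h1 := dvd_pow_self a hpne
    rw [show a ^ p = -(b ^ p) by linear_combination h] at h1
    exact dvd_neg.mp h1
  have hb : b ∣ a ^ p := by
    have h1 := dvd_pow_self b hpne
    rw [show b ^ p = -(a ^ p) by linear_combination h] at h1
    exact dvd_neg.mp h1
  exact ⟨(hco.pow_right).isUnit_of_dvd' dvd_rfl ha,
    (hco.symm.pow_right).isUnit_of_dvd' dvd_rfl hb⟩

/-- The Fermat equation `z0^p + z1^p + z2^p = 0`, `p ≥ 3`, has no solution in
coprime, not all constant polynomials over `ℂ`. -/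
theorem fermat_no_polynomial_solution (p : ℕ) (hp : 3 ≤ p)
    (z0 z1 z2 : ℂ[X])
    (hcop : ∀ d : ℂ[X], d ∣ z0 → d ∣ z1 → d ∣ z2 → IsUnit d)
    (hnc : ¬ (z0.natDegree = 0 ∧ z1.natDegree = 0 ∧ z2.natDegree = 0)) :
    z0 ^ p + z1 ^ p + z2 ^ p ≠ 0 := by
  intro hsum
  have hp1 : 1 ≤ p := by omega
  have hpne : p ≠ 0 := by omega
  have h01 : IsCoprime z0 z1 := fermat_coprime_aux p hp1 z0 z1 z2 hsum hcop
  have h12 : IsCoprime z1 z2 := by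
    apply fermat_coprime_aux p hp1 z1 z2 z0 (by linear_combination hsum)
    intro d h1 h2 h0; exact hcop d h0 h1 h2
  have h20 : IsCoprime z2 z0 := by
    apply fermat_coprime_aux p hp1 z2 z0 z1 (by linear_combination hsum)
    intro d h2 h0 h1; exact hcop d h0 h1 h2
  have hz0 : z0 ≠ 0 := by
    intro h
    rw [h, zero_pow hpne] at hsum
    obtain ⟨hu1, hu2⟩ := fermat_unit_aux p hpne z1 z2 h12 (by linear_combination hsum)
    exact hnc ⟨by simp [h], natDegree_eq_zero_of_isUnit hu1, natDegree_eq_zero_of_isUnit hu2⟩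
  have hz1 : z1 ≠ 0 := by
    intro h
    rw [h, zero_pow hpne] at hsum
    obtain ⟨hu1, hu2⟩ := fermat_unit_aux p hpne z2 z0 h20 (by linear_combination hsum)
    exact hnc ⟨natDegree_eq_zero_of_isUnit hu2, by simp [h], natDegree_eq_zero_of_isUnit hu1⟩
  have hz2 : z2 ≠ 0 := by
    intro h
    rw [h, zero_pow hpne] at hsum
    obtain ⟨hu1, hu2⟩ := fermat_unit_aux p hpne z0 z1 h01 (by linear_combination hsum)
    exact hnc ⟨natDegree_eq_zero_of_isUnit hu1, natDegree_eq_zero_of_isUnit hu2, by simp [h]⟩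
  have habc := Polynomial.abc (pow_ne_zero p hz0) (pow_ne_zero p hz1) (pow_ne_zero p hz2)
    (h01.pow) hsum
  rcases habc with ⟨hb0, hb1, hb2⟩ | ⟨hd0, hd1, hd2⟩
  · have hrad : radical (z0 ^ p * z1 ^ p * z2 ^ p) = radical (z0 * z1 * z2) := by
      rw [← mul_pow, ← mul_pow, radical_pow _ (by omega : p ≠ 0)]
    rw [hrad, natDegree_pow] at hb0 hb1 hb2
    have hprod : z0 * z1 * z2 ≠ 0 := mul_ne_zero (mul_ne_zero hz0 hz1) hz2
    have hle : (radical (z0 * z1 * z2)).natDegree ≤ (z0 * z1 * z2).natDegree :=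
      natDegree_le_of_dvd radical_dvd_self hprod
    rw [natDegree_mul (mul_ne_zero hz0 hz1) hz2, natDegree_mul hz0 hz1] at hle
    nlinarith [hb0, hb1, hb2, hle, hp]
  · have key : ∀ z : ℂ[X], z ≠ 0 → derivative (z ^ p) = 0 → z.natDegree = 0 := by
      intro z hz hd
      rw [derivative_pow] at hd
      have : derivative z = 0 := by
        rcases mul_eq_zero.mp hd with h | h
        · rcases mul_eq_zero.mp h with h' | h'
          · exfalso
            rw [C_eq_natCast] at h'
            exact hpne (by exact_mod_cast (Nat.cast_eq_zero (R := ℂ[X])).mp h')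
          · exact absurd h' (pow_ne_zero _ hz)
        · exact h
      exact natDegree_eq_zero_of_derivative_eq_zero this
    exact hnc ⟨key z0 hz0 hd0, key z1 hz1 hd1, key z2 hz2 hd2⟩
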